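/- Suppose k ≥ 2 and k < m < 2k. The number of fault-free tilings of an m×k rectangle by k×1 tiles equals m − k + 2. -/
import Mathlib


/-- The cells of an `m × n` rectangle: `(row, column)` with `row < m`, `column < n`. -/
def grid (m n : ℕ) : Finset (ℕ × ℕ) := Finset.range m ×ˢ Finset.range n

/-- A horizontal `k × 1` tile: `k` consecutive cells in one row. -/
def IsHTile (k : ℕ) (t : Finset (ℕ × ℕ)) : Prop :=
  ∃ i j : ℕ, t = (Finset.range k).image fun s => (i, j + s)

/-- A vertical `k × 1` tile: `k` consecutive cells in one column. -/
def IsVTile (k : ℕ) (t : Finset (ℕ × ℕ)) : Prop :=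
  ∃ i j : ℕ, t = (Finset.range k).image fun s => (i + s, j)

/-- A tiling of the `m × n` rectangle by `k × 1` tiles. -/
def IsTiling (m n k : ℕ) (T : Finset (Finset (ℕ × ℕ))) : Prop :=
  (∀ t ∈ T, IsHTile k t ∨ IsVTile k t) ∧
  (T : Set (Finset (ℕ × ℕ))).PairwiseDisjoint id ∧
  T.biUnion id = grid m n

/-- The number of tilings of the `m × n` rectangle by `k × 1` tiles. -/
noncomputable def numTilings (m n k : ℕ) : ℕ :=
  Nat.card {T : Finset (Finset (ℕ × ℕ)) // IsTiling m n k T}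

/-- The tiling `T` has a fault at `x = a`: every tile lies entirely in
columns `< a` or entirely in columns `≥ a`. -/
def HasFaultAt (T : Finset (Finset (ℕ × ℕ))) (a : ℕ) : Prop :=
  ∀ t ∈ T, (∀ c ∈ t, c.2 < a) ∨ (∀ c ∈ t, a ≤ c.2)

/-- A tiling of a rectangle with `n` columns is fault-free. -/
def FaultFree (n : ℕ) (T : Finset (Finset (ℕ × ℕ))) : Prop :=
  ∀ a : ℕ, 0 < a → a < n → ¬ HasFaultAt T a

/-- The number of fault-free tilings of the `m × n` rectangle by `k × 1` tiles. -/
noncomputable def numFFTilings (m n k : ℕ) : ℕ :=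
  Nat.card {T : Finset (Finset (ℕ × ℕ)) // IsTiling m n k T ∧ FaultFree n T}

namespace FFaux

def rowT (k i : ℕ) : Finset (ℕ × ℕ) := (Finset.range k).image fun s => (i, s)
def colT (k s j : ℕ) : Finset (ℕ × ℕ) := (Finset.range k).image fun t => (s + t, j)

lemma mem_rowT {k i : ℕ} {c : ℕ × ℕ} : c ∈ rowT k i ↔ c.1 = i ∧ c.2 < k := by
  obtain ⟨a, b⟩ := c
  simp only [rowT, Finset.mem_image, Finset.mem_range, Prod.mk.injEq]
  constructor
  · rintro ⟨s, hs, rfl, rfl⟩; exact ⟨rfl, hs⟩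
  · rintro ⟨rfl, hb⟩; exact ⟨b, hb, rfl, rfl⟩

lemma mem_colT {k s j : ℕ} {c : ℕ × ℕ} : c ∈ colT k s j ↔ s ≤ c.1 ∧ c.1 < s + k ∧ c.2 = j := by
  obtain ⟨a, b⟩ := c
  simp only [colT, Finset.mem_image, Finset.mem_range, Prod.mk.injEq]
  constructor
  · rintro ⟨t, ht, rfl, rfl⟩; omega
  · rintro ⟨h1, h2, rfl⟩; exact ⟨a - s, by omega, by omega, rfl⟩

lemma rowT_isH (k i : ℕ) : IsHTile k (rowT k i) := ⟨i, 0, by simp [rowT]⟩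

lemma colT_isV (k s j : ℕ) : IsVTile k (colT k s j) := ⟨s, j, rfl⟩

lemma rowT_ne_colT {k i s j : ℕ} (hk : 2 ≤ k) : rowT k i ≠ colT k s j := by
  intro h
  have h1 : ((i, 0) : ℕ × ℕ) ∈ rowT k i := mem_rowT.2 ⟨rfl, by omega⟩
  have h2 : ((i, 1) : ℕ × ℕ) ∈ rowT k i := mem_rowT.2 ⟨rfl, by omega⟩
  rw [h, mem_colT] at h1 h2
  omega

lemma rowT_injOn {k : ℕ} (hk : 1 ≤ k) {i i' : ℕ} (h : rowT k i = rowT k i') : i = i' := by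
  have h1 : ((i, 0) : ℕ × ℕ) ∈ rowT k i := mem_rowT.2 ⟨rfl, by omega⟩
  rw [h, mem_rowT] at h1
  exact h1.1

lemma colT_inj {k : ℕ} (hk : 1 ≤ k) {s j s' j' : ℕ} (h : colT k s j = colT k s' j') :
    s = s' ∧ j = j' := by
  have h1 : ((s, j) : ℕ × ℕ) ∈ colT k s j := mem_colT.2 ⟨le_refl _, by omega, rfl⟩
  have h2 : ((s', j') : ℕ × ℕ) ∈ colT k s' j' := mem_colT.2 ⟨le_refl _, by omega, rfl⟩
  rw [h, mem_colT] at h1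
  rw [← h, mem_colT] at h2
  omega

/-- canonical form of a horizontal tile inside the grid with n = k columns -/
lemma htile_eq {m k : ℕ} (hk : 1 ≤ k) {t : Finset (ℕ × ℕ)} (ht : IsHTile k t)
    (hsub : t ⊆ grid m k) : ∃ i, i < m ∧ t = rowT k i := by
  obtain ⟨i, j, rfl⟩ := ht
  have hmem : ((i, j + (k-1)) : ℕ × ℕ) ∈ (Finset.range k).image fun s => (i, j + s) :=
    Finset.mem_image.2 ⟨k - 1, Finset.mem_range.2 (by omega), rfl⟩
  have := hsub hmem
  simp only [grid, Finset.mem_product, Finset.mem_range] at this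
  have hj : j = 0 := by omega
  subst hj
  exact ⟨i, this.1, by simp [rowT]⟩

lemma vtile_eq {m k : ℕ} (hk : 1 ≤ k) {t : Finset (ℕ × ℕ)} (ht : IsVTile k t)
    (hsub : t ⊆ grid m k) : ∃ s j, s + k ≤ m ∧ j < k ∧ t = colT k s j := by
  obtain ⟨s, j, rfl⟩ := ht
  have hmem : ((s + (k-1), j) : ℕ × ℕ) ∈ (Finset.range k).image fun u => (s + u, j) :=
    Finset.mem_image.2 ⟨k - 1, Finset.mem_range.2 (by omega), rfl⟩
  have := hsub hmem
  simp only [grid, Finset.mem_product, Finset.mem_range] at this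
  exact ⟨s, j, by omega, this.2, rfl⟩

def fullH (m k : ℕ) : Finset (Finset (ℕ × ℕ)) := (Finset.range m).image (rowT k)

def mixT (m k s : ℕ) : Finset (Finset (ℕ × ℕ)) :=
  ((Finset.range m \ Finset.Ico s (s + k)).image (rowT k)) ∪
    ((Finset.range k).image (colT k s))

lemma mem_fullH {m k t} : t ∈ fullH m k ↔ ∃ i, i < m ∧ t = rowT k i := by
  simp only [fullH, Finset.mem_image, Finset.mem_range]
  constructor
  · rintro ⟨i, hi, rfl⟩; exact ⟨i, hi, rfl⟩
  · rintro ⟨i, hi, rfl⟩; exact ⟨i, hi, rfl⟩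

lemma mem_mixT {m k s t} :
    t ∈ mixT m k s ↔ (∃ i, i < m ∧ (i < s ∨ s + k ≤ i) ∧ t = rowT k i) ∨
      (∃ j, j < k ∧ t = colT k s j) := by
  simp only [mixT, Finset.mem_union, Finset.mem_image, Finset.mem_sdiff, Finset.mem_range,
    Finset.mem_Ico]
  constructor
  · rintro (⟨i, ⟨hi, hi2⟩, rfl⟩ | ⟨j, hj, rfl⟩)
    · exact Or.inl ⟨i, hi, by omega, rfl⟩
    · exact Or.inr ⟨j, hj, rfl⟩
  · rintro (⟨i, hi, hi2, rfl⟩ | ⟨j, hj, rfl⟩)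
    · exact Or.inl ⟨i, ⟨hi, by omega⟩, rfl⟩
    · exact Or.inr ⟨j, hj, rfl⟩

lemma tiling_fullH {m k : ℕ} (hk : 2 ≤ k) : IsTiling m k k (fullH m k) := by
  refine ⟨?_, ?_, ?_⟩
  · intro t ht
    obtain ⟨i, _, rfl⟩ := mem_fullH.1 ht
    exact Or.inl (rowT_isH k i)
  · intro t ht t' ht' hne
    obtain ⟨i, _, rfl⟩ := mem_fullH.1 ht
    obtain ⟨i', _, rfl⟩ := mem_fullH.1 ht'
    have hii : i ≠ i' := fun h => hne (by rw [h])
    simp only [Function.onFun, id]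
    rw [Finset.disjoint_left]
    intro c hc hc'
    rw [mem_rowT] at hc hc'
    omega
  · ext c
    simp only [Finset.mem_biUnion, id, grid, Finset.mem_product, Finset.mem_range]
    constructor
    · rintro ⟨t, ht, hc⟩
      obtain ⟨i, hi, rfl⟩ := mem_fullH.1 ht
      rw [mem_rowT] at hc
      omega
    · rintro ⟨h1, h2⟩
      exact ⟨rowT k c.1, mem_fullH.2 ⟨c.1, h1, rfl⟩, mem_rowT.2 ⟨rfl, h2⟩⟩

lemma tiling_mixT {m k s : ℕ} (hk : 2 ≤ k) (hs : s + k ≤ m) : IsTiling m k k (mixT m k s) := by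
  refine ⟨?_, ?_, ?_⟩
  · intro t ht
    rcases mem_mixT.1 ht with ⟨i, _, _, rfl⟩ | ⟨j, _, rfl⟩
    · exact Or.inl (rowT_isH k i)
    · exact Or.inr (colT_isV k s j)
  · intro t ht t' ht' hne
    simp only [Function.onFun, id]
    rw [Finset.disjoint_left]
    intro c hc hc'
    rcases mem_mixT.1 ht with ⟨i, hi, hi2, rfl⟩ | ⟨j, hj, rfl⟩ <;>
      rcases mem_mixT.1 ht' with ⟨i', hi', hi2', rfl⟩ | ⟨j', hj', rfl⟩ <;>
      simp only [mem_rowT, mem_colT] at hc hc'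
    · exact hne (by obtain ⟨rfl, -⟩ := hc; obtain ⟨rfl, -⟩ := hc'; rfl) |>.elim
    · omega
    · omega
    · exact hne (by obtain ⟨-, -, rfl⟩ := hc; obtain ⟨-, -, rfl⟩ := hc'; rfl) |>.elim
  · ext c
    simp only [Finset.mem_biUnion, id, grid, Finset.mem_product, Finset.mem_range]
    constructor
    · rintro ⟨t, ht, hc⟩
      rcases mem_mixT.1 ht with ⟨i, hi, hi2, rfl⟩ | ⟨j, hj, rfl⟩ <;>
        simp only [mem_rowT, mem_colT] at hc <;> omega
    · rintro ⟨h1, h2⟩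
      by_cases hc : s ≤ c.1 ∧ c.1 < s + k
      · exact ⟨colT k s c.2, mem_mixT.2 (Or.inr ⟨c.2, h2, rfl⟩),
          mem_colT.2 ⟨hc.1, hc.2, rfl⟩⟩
      · exact ⟨rowT k c.1, mem_mixT.2 (Or.inl ⟨c.1, h1, by omega, rfl⟩),
          mem_rowT.2 ⟨rfl, h2⟩⟩

/-- any tiling containing a full row tile is fault free -/
lemma ff_of_rowT {k : ℕ} (hk : 1 ≤ k) {T : Finset (Finset (ℕ × ℕ))} {i : ℕ}
    (h : rowT k i ∈ T) : FaultFree k T := by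
  intro a ha hak hfault
  rcases hfault _ h with hL | hR
  · have := hL (i, k - 1) (mem_rowT.2 ⟨rfl, by omega⟩)
    simp at this; omega
  · have := hR (i, 0) (mem_rowT.2 ⟨rfl, by omega⟩)
    simp at this; omega

lemma classify {m k : ℕ} (hk : 2 ≤ k) (h1 : k < m) (h2 : m < 2 * k)
    {T : Finset (Finset (ℕ × ℕ))} (hT : IsTiling m k k T) :
    T = fullH m k ∨ ∃ s, s ≤ m - k ∧ T = mixT m k s := by
  obtain ⟨htype, hdisj, hcover⟩ := hT
  have hsub : ∀ t ∈ T, t ⊆ grid m k := by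
    intro t ht
    rw [← hcover]
    exact Finset.subset_biUnion_of_mem id ht
  have hcanon : ∀ t ∈ T, (∃ i, i < m ∧ t = rowT k i) ∨
      (∃ s j, s + k ≤ m ∧ j < k ∧ t = colT k s j) := by
    intro t ht
    rcases htype t ht with h | h
    · exact Or.inl (htile_eq (by omega) h (hsub t ht))
    · exact Or.inr (vtile_eq (by omega) h (hsub t ht))
  have huniq : ∀ t ∈ T, ∀ t' ∈ T, ∀ c : ℕ × ℕ, c ∈ t → c ∈ t' → t = t' := by
    intro t ht t' ht' c hc hc'
    by_contra hne
    exact Finset.disjoint_left.1 (hdisj ht ht' hne) hc hc'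
  have hcell : ∀ c : ℕ × ℕ, c.1 < m → c.2 < k → ∃ t ∈ T, c ∈ t := by
    intro c h1 h2
    have : c ∈ grid m k := by
      simp only [grid, Finset.mem_product, Finset.mem_range]; exact ⟨h1, h2⟩
    rw [← hcover] at this
    simpa using this
  have hcovered : ∀ c : ℕ × ℕ, c.1 < m → c.2 < k →
      rowT k c.1 ∈ T ∨ ∃ a, a ≤ c.1 ∧ c.1 < a + k ∧ a + k ≤ m ∧ colT k a c.2 ∈ T := by
    intro c h1 h2
    obtain ⟨t, ht, hct⟩ := hcell c h1 h2
    rcases hcanon t ht with ⟨i, hi, rfl⟩ | ⟨a, j, ha, hj, rfl⟩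
    · rw [mem_rowT] at hct
      rw [← hct.1] at ht
      exact Or.inl ht
    · rw [mem_colT] at hct
      rw [← hct.2.2] at ht
      exact Or.inr ⟨a, hct.1, hct.2.1, ha, ht⟩
  by_cases hall : ∀ i, i < m → rowT k i ∈ T
  · left
    apply Finset.Subset.antisymm
    · intro t ht
      obtain ⟨c, hc⟩ : ∃ c, c ∈ t := by
        rcases hcanon t ht with ⟨i, hi, rfl⟩ | ⟨a, j, ha, hj, rfl⟩
        · exact ⟨(i, 0), mem_rowT.2 ⟨rfl, by omega⟩⟩
        · exact ⟨(a, j), mem_colT.2 ⟨le_refl _, by omega, rfl⟩⟩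
      have hcg := hsub t ht hc
      simp only [grid, Finset.mem_product, Finset.mem_range] at hcg
      have hr : rowT k c.1 ∈ T := hall c.1 hcg.1
      have : t = rowT k c.1 := huniq t ht _ hr c hc (mem_rowT.2 ⟨rfl, hcg.2⟩)
      exact mem_fullH.2 ⟨c.1, hcg.1, this⟩
    · intro t ht
      obtain ⟨i, hi, rfl⟩ := mem_fullH.1 ht
      exact hall i hi
  · right
    push_neg at hall
    have hex : ∃ i, i < m ∧ rowT k i ∉ T := hall
    set s := Nat.find hex with hs
    obtain ⟨hsm, hsnot⟩ : s < m ∧ rowT k s ∉ T := Nat.find_spec hex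
    have hmin : ∀ i, i < s → rowT k i ∈ T := by
      intro i hi
      by_contra hni
      exact Nat.find_min hex hi ⟨by omega, hni⟩
    -- vertical tiles at s
    have hvert : ∀ j, j < k → s + k ≤ m ∧ colT k s j ∈ T := by
      intro j hj
      rcases hcovered (s, j) hsm hj with h | ⟨a, ha1, ha2, ha3, ha4⟩
      · exact absurd h hsnot
      · rcases Nat.lt_or_ge a s with hlt | hge
        · exfalso
          have hr : rowT k a ∈ T := hmin a hlt
          have : rowT k a = colT k a j := huniq _ hr _ ha4 (a, j)
            (mem_rowT.2 ⟨rfl, hj⟩) (mem_colT.2 ⟨le_refl _, by omega, rfl⟩)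
          exact rowT_ne_colT hk this
        · have : a = s := by omega
          subst this
          exact ⟨ha3, ha4⟩
    have hsk : s + k ≤ m := (hvert 0 (by omega)).1
    -- horizontal rows elsewhere
    have hhor : ∀ i, i < m → (i < s ∨ s + k ≤ i) → rowT k i ∈ T := by
      intro i hi hi2
      rcases hi2 with h | h
      · exact hmin i h
      · rcases hcovered (i, 0) hi (by omega) with hr | ⟨a, ha1, ha2, ha3, ha4⟩
        · exact hr
        · exfalso
          have hc0 : colT k s 0 ∈ T := (hvert 0 (by omega)).2
          have hane : a ≠ s := by omega
          have hover : ((a, 0) : ℕ × ℕ) ∈ colT k s 0 := by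
            refine mem_colT.2 ⟨by omega, by omega, rfl⟩
          have : colT k a 0 = colT k s 0 := huniq _ ha4 _ hc0 (a, 0)
            (mem_colT.2 ⟨le_refl _, by omega, rfl⟩) hover
          exact hane (colT_inj (by omega) this).1
    refine ⟨s, by omega, ?_⟩
    have hmsub : mixT m k s ⊆ T := by
      intro t ht
      rcases mem_mixT.1 ht with ⟨i, hi, hi2, rfl⟩ | ⟨j, hj, rfl⟩
      · exact hhor i hi hi2
      · exact (hvert j hj).2
    apply Finset.Subset.antisymm _ hmsub
    intro t ht
    obtain ⟨c, hc⟩ : ∃ c, c ∈ t := by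
      rcases hcanon t ht with ⟨i, hi, rfl⟩ | ⟨a, j, ha, hj, rfl⟩
      · exact ⟨(i, 0), mem_rowT.2 ⟨rfl, by omega⟩⟩
      · exact ⟨(a, j), mem_colT.2 ⟨le_refl _, by omega, rfl⟩⟩
    have hcg := hsub t ht hc
    rw [← (tiling_mixT hk hsk).2.2] at hcg
    simp only [Finset.mem_biUnion, id] at hcg
    obtain ⟨t', ht', hct'⟩ := hcg
    rwa [huniq t ht t' (hmsub ht') c hc hct']


lemma colT_notMem_fullH {m k s j : ℕ} (hk : 2 ≤ k) : colT k s j ∉ fullH m k := by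
  intro h
  obtain ⟨i, _, hi⟩ := mem_fullH.1 h
  exact rowT_ne_colT hk hi.symm

lemma mixT_injOn {m k : ℕ} (hk : 2 ≤ k) {s s' : ℕ} (h : mixT m k s = mixT m k s') :
    s = s' := by
  have h1 : colT k s 0 ∈ mixT m k s := mem_mixT.2 (Or.inr ⟨0, by omega, rfl⟩)
  rw [h] at h1
  rcases mem_mixT.1 h1 with ⟨i, _, _, hi⟩ | ⟨j, _, hj⟩
  · exact absurd hi.symm (rowT_ne_colT hk)
  · exact (colT_inj (by omega) hj).1

end FFaux

theorem stmt_7 (k m : ℕ) (hk : 2 ≤ k) (h1 : k < m) (h2 : m < 2 * k) :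
    numFFTilings m k k = m - k + 2 := by
  classical
  open FFaux in
  have key : ∀ T : Finset (Finset (ℕ × ℕ)), (IsTiling m k k T ∧ FaultFree k T) ↔
      T ∈ insert (fullH m k) ((Finset.range (m - k + 1)).image (mixT m k)) := by
    intro T
    constructor
    · rintro ⟨hT, -⟩
      rcases classify hk h1 h2 hT with rfl | ⟨s, hs, rfl⟩
      · exact Finset.mem_insert_self _ _
      · exact Finset.mem_insert_of_mem (Finset.mem_image.2 ⟨s, Finset.mem_range.2 (by omega), rfl⟩)
    · intro hT
      rcases Finset.mem_insert.1 hT with rfl | hT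
      · refine ⟨tiling_fullH hk, ff_of_rowT (by omega) (i := 0) ?_⟩
        exact mem_fullH.2 ⟨0, by omega, rfl⟩
      · obtain ⟨s, hs, rfl⟩ := Finset.mem_image.1 hT
        rw [Finset.mem_range] at hs
        refine ⟨tiling_mixT hk (by omega), ?_⟩
        rcases Nat.eq_zero_or_pos s with rfl | hspos
        · exact ff_of_rowT (by omega) (i := m - 1)
            (mem_mixT.2 (Or.inl ⟨m - 1, by omega, by omega, rfl⟩))
        · exact ff_of_rowT (by omega) (i := 0)
            (mem_mixT.2 (Or.inl ⟨0, by omega, by omega, rfl⟩))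
  have hnm : FFaux.fullH m k ∉ Finset.image (FFaux.mixT m k) (Finset.range (m - k + 1)) := by
    intro h
    obtain ⟨s, -, hs⟩ := Finset.mem_image.1 h
    have : FFaux.colT k s 0 ∈ FFaux.fullH m k := by
      rw [← hs]
      exact FFaux.mem_mixT.2 (Or.inr ⟨0, by omega, rfl⟩)
    exact FFaux.colT_notMem_fullH hk this
  have hinj : Set.InjOn (FFaux.mixT m k) (Finset.range (m - k + 1)) :=
    fun a _ b _ h => FFaux.mixT_injOn hk h
  rw [numFFTilings, Nat.card_congr (Equiv.subtypeEquivRight key), Nat.card_eq_fintype_card,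
    Fintype.card_coe, Finset.card_insert_of_notMem hnm, Finset.card_image_of_injOn hinj,
    Finset.card_range]
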